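/- arXiv:math/0304355 — 2 statements merged into one kernel-verified Lean document; each statement's English description precedes it below -/
import Mathlib

section
/- For every infinite path u ∈ Z, the sets D_α, where α ∈ Y ranges over the initial segments of u, form a neighborhood basis at u in the path space Y ∪ Z. -/
namespace GraphCstar

/-- A directed graph: vertices, edges, source and range maps. -/
structure Graph where
  V : Type
  Ed : Type
  src : Ed → V
  rng : Ed → V

variable (G : Graph)

/-- Validity of a list of edges as a path starting at vertex `v`. -/
def Valid : G.V → List G.Ed → Prop
  | _, [] => True
  | v, e :: l => G.src e = v ∧ Valid (G.rng e) l

/-- Terminal vertex of a list of edges starting at `v`. -/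
def rngTo : G.V → List G.Ed → G.V
  | v, [] => v
  | _, e :: l => rngTo (G.rng e) l

theorem valid_append (l₁ l₂ : List G.Ed) (v : G.V) :
    Valid G v (l₁ ++ l₂) ↔ Valid G v l₁ ∧ Valid G (rngTo G v l₁) l₂ := by
  induction l₁ generalizing v with
  | nil => simp [Valid, rngTo]
  | cons e l ih => simp [Valid, rngTo, ih, and_assoc]

theorem rngTo_append (l₁ l₂ : List G.Ed) (v : G.V) :
    rngTo G v (l₁ ++ l₂) = rngTo G (rngTo G v l₁) l₂ := by
  induction l₁ generalizing v with
  | nil => rfl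
  | cons e l ih => simp [rngTo, ih]

theorem valid_drop {v : G.V} {l : List G.Ed} (n : ℕ) (h : Valid G v l) :
    Valid G (rngTo G v (l.take n)) (l.drop n) := by
  have h' : Valid G v (l.take n ++ l.drop n) := by
    rw [List.take_append_drop]; exact h
  exact ((valid_append G _ _ _).mp h').2

/-- A finite path in the graph `G`; vertices are the paths of length `0`. -/
structure FinPath where
  start : G.V
  edges : List G.Ed
  valid : Valid G start edges

namespace FinPath

variable {G}

/-- The terminal vertex (range) of a finite path. -/
def rngF (α : FinPath G) : G.V := rngTo G α.start α.edges

/-- The length of a finite path. -/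
def len (α : FinPath G) : ℕ := α.edges.length

/-- The finite path of length `0` at the vertex `v`. -/
def vp (v : G.V) : FinPath G := ⟨v, [], trivial⟩

/-- The finite path consisting of the single edge `e`. -/
def ep (e : G.Ed) : FinPath G := ⟨G.src e, [e], ⟨rfl, trivial⟩⟩

/-- Concatenation of finite paths. -/
def concat (α β : FinPath G) (h : β.start = α.rngF) : FinPath G :=
  ⟨α.start, α.edges ++ β.edges,
    (valid_append G _ _ _).mpr
      ⟨α.valid, by
        show Valid G α.rngF β.edges
        rw [← h]; exact β.valid⟩⟩

theorem rngF_concat (α β : FinPath G) (h : β.start = α.rngF) :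
    (α.concat β h).rngF = β.rngF := by
  show rngTo G α.start (α.edges ++ β.edges) = _
  rw [rngTo_append]
  show rngTo G α.rngF β.edges = _
  rw [← h]; rfl

end FinPath

/-- `α` is an initial segment of `β`. -/
def IsPref (α β : FinPath G) : Prop := α.start = β.start ∧ α.edges <+: β.edges

/-- The "remainder" path: if `α` is an initial segment of `β`, the path `μ` with
`β = αμ` (for other inputs the value is junk). -/
def diff (α β : FinPath G) : FinPath G :=
  ⟨rngTo G β.start (β.edges.take α.edges.length),
    β.edges.drop α.edges.length, valid_drop G _ β.valid⟩

open Classical in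
/-- Totalized concatenation of finite paths (junk value when endpoints do not match). -/
noncomputable def catP (α β : FinPath G) : FinPath G :=
  if h : β.start = α.rngF then α.concat β h else α

open Classical in
/-- The product on `T = {(α,β) ∈ Y × Y : r(α) = r(β)} ∪ {z}`, with `z` encoded as `none`. -/
noncomputable def mulT :
    Option (FinPath G × FinPath G) → Option (FinPath G × FinPath G) →
      Option (FinPath G × FinPath G)
  | none, _ => none
  | _, none => none
  | some (α₁, β₁), some (α₂, β₂) =>
    if IsPref G β₁ α₂ then some (catP G α₁ (diff G β₁ α₂), β₂)
    else if IsPref G α₂ β₁ then some (α₁, catP G β₂ (diff G α₂ β₁))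
    else none

/-- The involution on `T`. -/
def starT :
    Option (FinPath G × FinPath G) → Option (FinPath G × FinPath G)
  | none => none
  | some (α, β) => some (β, α)

/-- The subset of `Option (FinPath G × FinPath G)` corresponding to
`T = {(α,β) : r(α) = r(β)} ∪ {z}`. -/
def TsetT : Set (Option (FinPath G × FinPath G)) :=
  {t | ∀ α β : FinPath G, t = some (α, β) → α.rngF = β.rngF}

/-- An infinite path in the graph `G`. -/
structure InfPath where
  seq : ℕ → G.Ed
  valid : ∀ i, G.src (seq (i + 1)) = G.rng (seq i)

/-- The initial vertex of an infinite path. -/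
def InfPath.start {G : Graph} (z : InfPath G) : G.V := G.src (z.seq 0)

/-- Prepending an edge to an infinite path. -/
def consInf (e : G.Ed) (z : InfPath G) (h : z.start = G.rng e) : InfPath G where
  seq := fun n =>
    match n with
    | 0 => e
    | m + 1 => z.seq m
  valid := fun i =>
    match i with
    | 0 => h
    | m + 1 => z.valid m

/-- Prepending a finite edge list to an infinite path (with the starting vertex recorded). -/
def appendInfAux :
    (l : List G.Ed) → (v : G.V) → Valid G v l → (z : InfPath G) →
      z.start = rngTo G v l → {w : InfPath G // w.start = v}
  | [], _, _, z, h => ⟨z, h⟩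
  | e :: l, v, hv, z, h =>
    let w := appendInfAux l (G.rng e) hv.2 z h
    ⟨consInf G e w.1 w.2, hv.1⟩

/-- Concatenation of a finite path with an infinite path. -/
def FinPath.concatInf {G : Graph} (α : FinPath G) (z : InfPath G)
    (h : z.start = α.rngF) : InfPath G :=
  (appendInfAux G α.edges α.start α.valid z h).1

/-- The path space `Y ∪ Z` of all finite and infinite paths. -/
def PathSp := FinPath G ⊕ InfPath G

/-- The initial vertex of a (finite or infinite) path. -/
def startOf : PathSp G → G.V
  | .inl α => α.start
  | .inr z => z.start

/-- The length of a path, in `ℕ∞`. -/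
def lenOf : PathSp G → ℕ∞
  | .inl α => (α.edges.length : ℕ∞)
  | .inr _ => ⊤

/-- The `i`-th edge (0-indexed) of a path, if it exists. -/
def nthEdge : PathSp G → ℕ → Option G.Ed
  | .inl α, i => α.edges[i]?
  | .inr z, i => some (z.seq i)

/-- `x = αγ` for some (finite or infinite, possibly length `0`) path `γ`;
that is, `α` is an initial segment of `x`, i.e. `x ∈ D_α`. -/
def Ext (α : FinPath G) (x : PathSp G) : Prop :=
  (∃ (β : FinPath G) (h : β.start = α.rngF), x = .inl (α.concat β h)) ∨
  (∃ (w : InfPath G) (h : w.start = α.rngF), x = .inr (α.concatInf w h))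

/-- The basic set `D_α ⊆ Y ∪ Z`. -/
def Dset (α : FinPath G) : Set (PathSp G) := {x | Ext G α x}

/-- The topology on the path space, generated by the sets `D_α` and their complements. -/
def pathTop : TopologicalSpace (PathSp G) :=
  .generateFrom (Set.range (Dset G) ∪ Set.range fun α => (Dset G α)ᶜ)

/-- The vertex `v` emits infinitely many edges. -/
def Vinf (v : G.V) : Prop := {e | G.src e = v}.Infinite

/-- Membership in `X = Y_∞ ∪ Z`. -/
def memX : PathSp G → Prop
  | .inl α => Vinf G α.rngF
  | .inr _ => True

/-- The set `X = Y_∞ ∪ Z`. -/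
def Xset : Set (PathSp G) := {x | memX G x}

/-- Tail equivalence of paths: `x = αγ` and `y = βγ` for finite paths `α, β`
and a common (finite or infinite) path `γ`. -/
def TailEq (x y : PathSp G) : Prop :=
  (∃ (α β γ : FinPath G) (h₁ : γ.start = α.rngF) (h₂ : γ.start = β.rngF),
      x = .inl (α.concat γ h₁) ∧ y = .inl (β.concat γ h₂)) ∨
  (∃ (α β : FinPath G) (w : InfPath G) (h₁ : w.start = α.rngF)
      (h₂ : w.start = β.rngF),
      x = .inr (α.concatInf w h₁) ∧ y = .inr (β.concatInf w h₂))

/-- A subset of the path space is invariant (a union of tail-equivalence classes). -/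
def InvariantS (F : Set (PathSp G)) : Prop :=
  ∀ x ∈ F, ∀ y, TailEq G x y → y ∈ F

/-- Membership `(x, k, y) ∈ G` for the path groupoid: `x = αγ`, `y = βγ` and
`k = l(α) - l(β)`. -/
def InG (x : PathSp G) (k : ℤ) (y : PathSp G) : Prop :=
  (∃ (α β γ : FinPath G) (h₁ : γ.start = α.rngF) (h₂ : γ.start = β.rngF),
      x = .inl (α.concat γ h₁) ∧ y = .inl (β.concat γ h₂) ∧
        k = (α.len : ℤ) - (β.len : ℤ)) ∨
  (∃ (α β : FinPath G) (w : InfPath G) (h₁ : w.start = α.rngF)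
      (h₂ : w.start = β.rngF),
      x = .inr (α.concatInf w h₁) ∧ y = .inr (β.concatInf w h₂) ∧
        k = (α.len : ℤ) - (β.len : ℤ))

/-- There is a finite path from `u` to `w`. -/
def Reach (u w : G.V) : Prop := ∃ β : FinPath G, β.start = u ∧ β.rngF = w

/-- A loop based at the vertex `v`. -/
def LoopAt (v : G.V) (α : FinPath G) : Prop :=
  α.edges ≠ [] ∧ α.start = v ∧ α.rngF = v ∧
    ∀ i e, i + 1 < α.edges.length → α.edges[i]? = some e → G.rng e ≠ v

/-- Condition (K): no vertex has exactly one loop based at it. -/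
def CondK : Prop := ¬ ∃ v : G.V, ∃! α : FinPath G, LoopAt G v α

/-- A point of the path space has trivial isotropy if whenever `x = αγ = βγ`
then `l(α) = l(β)`. -/
def TrivIso (x : PathSp G) : Prop :=
  ∀ α β : FinPath G,
    ((∃ (γ : FinPath G) (h₁ : γ.start = α.rngF) (h₂ : γ.start = β.rngF),
        x = .inl (α.concat γ h₁) ∧ x = .inl (β.concat γ h₂)) ∨
     (∃ (w : InfPath G) (h₁ : w.start = α.rngF) (h₂ : w.start = β.rngF),
        x = .inr (α.concatInf w h₁) ∧ x = .inr (β.concatInf w h₂))) →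
    α.len = β.len


/-! ### Auxiliary lemmas -/

section Aux

variable {G : Graph}

theorem FinPath.ext' {α β : FinPath G} (h₁ : α.start = β.start)
    (h₂ : α.edges = β.edges) : α = β := by
  cases α; cases β; cases h₁; cases h₂; rfl

theorem InfPath.ext' {w w' : InfPath G} (h : ∀ i, w.seq i = w'.seq i) :
    w = w' := by
  cases w; cases w'
  have : _ = _ := funext h
  simp only at this
  subst this
  rfl

theorem appendInfAux_start (l : List G.Ed) (v : G.V) (hv : Valid G v l)
    (z : InfPath G) (h : z.start = rngTo G v l) :
    (appendInfAux G l v hv z h).1.start = v :=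
  (appendInfAux G l v hv z h).2

theorem appendInfAux_seq :
    ∀ (l : List G.Ed) (v : G.V) (hv : Valid G v l) (z : InfPath G)
      (h : z.start = rngTo G v l) (i : ℕ),
      (appendInfAux G l v hv z h).1.seq i =
        if hi : i < l.length then l[i] else z.seq (i - l.length)
  | [], v, hv, z, h, i => by simp [appendInfAux]
  | e :: l, v, hv, z, h, i => by
    match i with
    | 0 => simp [appendInfAux, consInf]
    | i + 1 =>
      have := appendInfAux_seq l (G.rng e) hv.2 z h i
      simp only [appendInfAux, consInf, List.length_cons]
      rw [this]
      by_cases hi : i < l.length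
      · rw [dif_pos hi, dif_pos (by omega)]
        simp
      · rw [dif_neg hi, dif_neg (by omega)]
        simp [Nat.succ_sub_succ]

theorem concatInf_start (α : FinPath G) (z : InfPath G) (h : z.start = α.rngF) :
    (α.concatInf z h).start = α.start :=
  appendInfAux_start _ _ _ _ _

theorem concatInf_seq (α : FinPath G) (z : InfPath G) (h : z.start = α.rngF)
    (i : ℕ) :
    (α.concatInf z h).seq i =
      if hi : i < α.edges.length then α.edges[i] else z.seq (i - α.edges.length) :=
  appendInfAux_seq _ _ _ _ _ _

/-- `α` agrees with `x` on its initial vertex and its edges. -/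
def Agrees (α : FinPath G) (x : PathSp G) : Prop :=
  α.start = startOf G x ∧ ∀ i, i < α.edges.length → nthEdge G x i = α.edges[i]?

theorem agrees_of_ext {α : FinPath G} {x : PathSp G} (h : Ext G α x) :
    Agrees α x := by
  rcases h with ⟨β, hβ, rfl⟩ | ⟨w, hw, rfl⟩
  · refine ⟨rfl, fun i hi => ?_⟩
    show (α.edges ++ β.edges)[i]? = α.edges[i]?
    rw [List.getElem?_append, if_pos hi]
  · refine ⟨(concatInf_start α w hw).symm, fun i hi => ?_⟩
    show some ((α.concatInf w hw).seq i) = α.edges[i]?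
    rw [concatInf_seq, dif_pos hi]
    exact (List.getElem?_eq_getElem hi).symm

theorem valid_seq (w : InfPath G) :
    ∀ (n k : ℕ), Valid G (G.src (w.seq k)) (List.ofFn fun i : Fin n => w.seq (k + i))
  | 0, _ => trivial
  | n + 1, k => by
    have h := valid_seq w n (k + 1)
    rw [w.valid k] at h
    have hf : (List.ofFn fun i : Fin n => w.seq (k + 1 + ↑i)) =
        List.ofFn fun i : Fin n => w.seq (k + ↑(Fin.succ i)) := by
      congr 1; funext i; congr 1; simp [Fin.val_succ]; omega
    rw [hf] at h
    simp only [List.ofFn_succ, Valid]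
    exact ⟨by simp, by simpa using h⟩

/-- The initial segment of the infinite path `w` of length `n`. -/
def prefW (w : InfPath G) (n : ℕ) : FinPath G :=
  ⟨w.start, List.ofFn fun i : Fin n => w.seq i, by
    have := valid_seq w n 0
    simpa [InfPath.start] using this⟩

theorem prefW_len (w : InfPath G) (n : ℕ) : (prefW w n).edges.length = n := by
  simp [prefW]

theorem rngF_prefW (w : InfPath G) : ∀ n, (prefW w n).rngF = G.src (w.seq n)
  | 0 => rfl
  | n + 1 => by
    have ih := rngF_prefW w n
    show rngTo G w.start (List.ofFn fun i : Fin (n + 1) => w.seq i) = _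
    rw [List.ofFn_succ', List.concat_eq_append, rngTo_append]
    have he : (List.ofFn fun i : Fin n => w.seq i.castSucc) =
        (List.ofFn fun i : Fin n => w.seq i) := by
      congr
    rw [he]
    show rngTo G ((prefW w n).rngF) [w.seq (Fin.last n)] = _
    simp [rngTo, Fin.last, w.valid n]

/-- The shift of an infinite path by `n`. -/
def shiftW (w : InfPath G) (n : ℕ) : InfPath G :=
  ⟨fun i => w.seq (n + i), fun i => by
    show G.src (w.seq (n + (i + 1))) = G.rng (w.seq (n + i))
    rw [← w.valid (n + i)]; congr 1⟩

theorem ext_of_agrees {α : FinPath G} {x : PathSp G} (h : Agrees α x) :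
    Ext G α x := by
  obtain ⟨hs, he⟩ := h
  match x with
  | .inl δ =>
    have hlen : α.edges.length ≤ δ.edges.length := by
      rcases Nat.eq_zero_or_pos α.edges.length with h0 | h0
      · omega
      · have h2 : δ.edges[α.edges.length - 1]? = α.edges[α.edges.length - 1]? :=
          he (α.edges.length - 1) (by omega)
        have h3 : α.edges[α.edges.length - 1]? =
            some (α.edges[α.edges.length - 1]'(by omega)) :=
          List.getElem?_eq_getElem (by omega)
        rw [h3] at h2
        obtain ⟨hlt, -⟩ := List.getElem?_eq_some_iff.mp h2
        omega
    have htake : δ.edges.take α.edges.length = α.edges := by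
      apply List.ext_getElem?
      intro i
      rw [List.getElem?_take]
      split
      · exact (he i ‹_›).symm ▸ rfl
      · rw [List.getElem?_eq_none (by omega)]
    have hstart : δ.start = α.start := hs.symm
    have hβs : (diff G α δ).start = α.rngF := by
      show rngTo G δ.start (δ.edges.take α.edges.length) = α.rngF
      rw [htake, hstart]; rfl
    refine Or.inl ⟨diff G α δ, hβs, ?_⟩
    have hcd : α.concat (diff G α δ) hβs = δ := by
      refine FinPath.ext' hstart.symm ?_
      show α.edges ++ δ.edges.drop α.edges.length = δ.edges
      conv_rhs => rw [← List.take_append_drop α.edges.length δ.edges, htake]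
    rw [hcd]
  | .inr w =>
    set n := α.edges.length with hn
    have hedges : α.edges = (prefW w n).edges := by
      apply List.ext_getElem?
      intro i
      show α.edges[i]? = (List.ofFn fun i : Fin n => w.seq i)[i]?
      rw [List.getElem?_ofFn]
      by_cases hi : i < n
      · rw [← he i hi]
        simp [List.ofFnNthVal, hi, nthEdge]
      · rw [List.getElem?_eq_none (by omega)]
        simp [List.ofFnNthVal, hi]
    have hα : α = prefW w n := FinPath.ext' hs hedges
    have hws : (shiftW w n).start = α.rngF := by
      rw [hα]
      show G.src ((shiftW w n).seq 0) = _
      rw [rngF_prefW w n]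
      show G.src (w.seq (n + 0)) = _
      norm_num
    refine Or.inr ⟨shiftW w n, hws, ?_⟩
    congr 1
    apply InfPath.ext'
    intro i
    rw [concatInf_seq]
    split
    · next hi =>
      have h1 : some (w.seq i) = α.edges[i]? := he i hi
      rw [List.getElem?_eq_getElem hi] at h1
      exact Option.some.inj h1
    · next hi =>
      show w.seq i = w.seq (n + (i - α.edges.length))
      congr 1
      rw [hn]
      omega

theorem ext_iff_agrees (α : FinPath G) (x : PathSp G) :
    Ext G α x ↔ Agrees α x :=
  ⟨agrees_of_ext, ext_of_agrees⟩

theorem ext_prefW (w : InfPath G) (n : ℕ) : Ext G (prefW w n) (Sum.inr w) := by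
  apply ext_of_agrees
  refine ⟨rfl, fun i hi => ?_⟩
  rw [prefW_len] at hi
  show some (w.seq i) = (List.ofFn fun i : Fin n => w.seq i)[i]?
  simp [List.getElem?_ofFn, List.ofFnNthVal, hi]

theorem dset_prefW_subset (w : InfPath G) {m n : ℕ} (hmn : n ≤ m) :
    Dset G (prefW w m) ⊆ Dset G (prefW w n) := by
  intro x hx
  have h := agrees_of_ext hx
  apply ext_of_agrees
  obtain ⟨hs, he⟩ := h
  refine ⟨hs, fun i hi => ?_⟩
  rw [prefW_len] at hi
  have := he i (by rw [prefW_len]; omega)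
  rw [this]
  show (List.ofFn fun i : Fin m => w.seq i)[i]? = (List.ofFn fun i : Fin n => w.seq i)[i]?
  simp [List.getElem?_ofFn, List.ofFnNthVal, hi, show i < m by omega]

theorem eq_of_agrees_agrees {α β : FinPath G} {x : PathSp G}
    (hα : Agrees α x) (hβ : Agrees β x) (hlen : α.edges.length = β.edges.length) :
    α = β := by
  refine FinPath.ext' (hα.1.trans hβ.1.symm) ?_
  apply List.ext_getElem?
  intro i
  by_cases hi : i < α.edges.length
  · rw [← hα.2 i hi, hβ.2 i (by omega)]
  · rw [List.getElem?_eq_none (by omega), List.getElem?_eq_none (by omega)]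

end Aux

/-- For every infinite path `u ∈ Z`, the sets `D_α`, where `α ∈ Y`
ranges over the initial segments of `u`, form a neighborhood basis at `u` in the
path space `Y ∪ Z`. -/
theorem nhds_basis_at_infinite_path (G : Graph) [Countable G.V] [Countable G.Ed]
    (hns : ∀ v : G.V, ∃ e : G.Ed, G.src e = v) (u : InfPath G) :
    (@nhds (PathSp G) (pathTop G) (Sum.inr u)).HasBasis
      (fun α : FinPath G => Ext G α (Sum.inr u)) (fun α => Dset G α) := by
  set gen : Set (Set (PathSp G)) :=
    Set.range (Dset G) ∪ Set.range fun α => (Dset G α)ᶜ with hgen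
  set S : Set (Set (PathSp G)) :=
    {s | Sum.inr u ∈ s ∧ s ∈ gen} with hS
  -- Every generating set containing `u` contains some `D_α` with `α` a prefix of `u`.
  have key : ∀ s ∈ S, ∃ α : FinPath G,
      Ext G α (Sum.inr u) ∧ Dset G α ⊆ s := by
    rintro s ⟨hus, hsg⟩
    rcases hsg with ⟨β, rfl⟩ | ⟨β, rfl⟩
    · exact ⟨β, hus, le_refl _⟩
    · -- `u ∉ D_β`; take `α` the prefix of `u` of length `l(β)`.
      refine ⟨prefW u β.edges.length, ext_prefW u _, fun x hx hxβ => ?_⟩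
      have hxα : Agrees (prefW u β.edges.length) x := agrees_of_ext hx
      have hxb : Agrees β x := agrees_of_ext hxβ
      have : prefW u β.edges.length = β :=
        eq_of_agrees_agrees hxα hxb (by rw [prefW_len])
      exact hus (this ▸ ext_prefW u β.edges.length)
  have hne : S.Nonempty := by
    refine ⟨Dset G (prefW u 0), ext_prefW u 0, Or.inl ⟨_, rfl⟩⟩
  have hdir : DirectedOn ((id : Set (PathSp G) → Set (PathSp G)) ⁻¹'o (· ≥ ·)) S := by
    rintro s hs t ht
    obtain ⟨α, hα, hαs⟩ := key s hs
    obtain ⟨β, hβ, hβt⟩ := key t ht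
    have hα' : α = prefW u α.edges.length :=
      eq_of_agrees_agrees (agrees_of_ext hα) (agrees_of_ext (ext_prefW u _))
        (by rw [prefW_len])
    have hβ' : β = prefW u β.edges.length :=
      eq_of_agrees_agrees (agrees_of_ext hβ) (agrees_of_ext (ext_prefW u _))
        (by rw [prefW_len])
    refine ⟨Dset G (prefW u (max α.edges.length β.edges.length)),
      ⟨ext_prefW u _, Or.inl ⟨_, rfl⟩⟩, ?_, ?_⟩
    · exact fun x hx => hαs (hα' ▸ dset_prefW_subset u (le_max_left _ _) hx)
    · exact fun x hx => hβt (hβ' ▸ dset_prefW_subset u (le_max_right _ _) hx)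
  have hbasis : (@nhds (PathSp G) (pathTop G) (Sum.inr u)).HasBasis
      (fun s => s ∈ S) id := by
    have hng := TopologicalSpace.nhds_generateFrom (g := gen) (a := (Sum.inr u : PathSp G))
    rw [show pathTop G = TopologicalSpace.generateFrom gen from rfl, hng]
    exact Filter.hasBasis_biInf_principal hdir hne
  refine hbasis.to_hasBasis (fun s hs => key s hs) (fun α hα => ?_)
  exact ⟨Dset G α, ⟨hα, Or.inl ⟨_, rfl⟩⟩, le_refl _⟩

end GraphCstar
end

section
/- The set X = Y_∞ ∪ Z is a closed subset of the path space Y ∪ Z, and X is invariant under tail equivalence: if x ∈ X and y ∈ Y ∪ Z is tail equivalent to x, then y ∈ X. -/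
namespace GraphCstar

variable (G : Graph)

/-! ### Auxiliary lemmas -/

theorem finPath_ext {G : Graph} {α β : FinPath G} (h1 : α.start = β.start)
    (h2 : α.edges = β.edges) : α = β := by
  cases α; cases β
  simp only at h1 h2
  subst h1; subst h2; rfl

theorem infPath_ext {G : Graph} {z w : InfPath G} (h : z.seq = w.seq) : z = w := by
  cases z; cases w
  simp only at h
  subst h; rfl

theorem appendInfAux_congr (G : Graph) (l : List G.Ed) (v : G.V)
    (hv hv' : Valid G v l) (z z' : InfPath G) (hz : z = z')
    (h : z.start = rngTo G v l) (h' : z'.start = rngTo G v l) :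
    (appendInfAux G l v hv z h).1 = (appendInfAux G l v hv' z' h').1 := by
  subst hz; rfl

theorem appendInfAux_snoc (G : Graph) (e : G.Ed) :
    ∀ (l : List G.Ed) (v : G.V) (hv : Valid G v (l ++ [e])) (hv₁ : Valid G v l)
      (z : InfPath G) (h : z.start = rngTo G v (l ++ [e])) (h' : z.start = G.rng e)
      (h₂ : (consInf G e z h').start = rngTo G v l),
      (appendInfAux G (l ++ [e]) v hv z h).1
        = (appendInfAux G l v hv₁ (consInf G e z h') h₂).1
  | [], v, hv, hv₁, z, h, h', h₂ => rfl
  | f :: l, v, hv, hv₁, z, h, h', h₂ => by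
    have ih := appendInfAux_snoc G e l (G.rng f) hv.2 hv₁.2 z h h' h₂
    show (consInf G f (appendInfAux G (l ++ [e]) (G.rng f) hv.2 z h).1
        (appendInfAux G (l ++ [e]) (G.rng f) hv.2 z h).2)
      = (consInf G f (appendInfAux G l (G.rng f) hv₁.2 (consInf G e z h') h₂).1
        (appendInfAux G l (G.rng f) hv₁.2 (consInf G e z h') h₂).2)
    have hsub : appendInfAux G (l ++ [e]) (G.rng f) hv.2 z h
        = appendInfAux G l (G.rng f) hv₁.2 (consInf G e z h') h₂ := Subtype.ext ih
    rw [hsub]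

theorem ext_self (G : Graph) (α : FinPath G) : Ext G α (Sum.inl α) := by
  refine Or.inl ⟨⟨α.rngF, [], trivial⟩, rfl, ?_⟩
  refine congrArg Sum.inl (finPath_ext rfl ?_)
  show α.edges = α.edges ++ []
  simp

theorem isOpen_singleton_inl (G : Graph) (α : FinPath G) (hα : ¬ Vinf G α.rngF) :
    @IsOpen (PathSp G) (pathTop G) {Sum.inl α} := by
  letI := pathTop G
  have hfin : {e : G.Ed | G.src e = α.rngF}.Finite := Set.not_infinite.mp hα
  haveI : Finite {e : G.Ed // G.src e = α.rngF} := hfin.to_subtype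
  -- extension of α by an edge e emitted from r(α)
  let ext1 : {e : G.Ed // G.src e = α.rngF} → FinPath G := fun p =>
    α.concat (FinPath.ep p.1) p.2
  have hDopen : ∀ β : FinPath G, IsOpen (Dset G β) := fun β =>
    TopologicalSpace.isOpen_generateFrom_of_mem (Or.inl ⟨β, rfl⟩)
  have hCopen : ∀ β : FinPath G, IsOpen (Dset G β)ᶜ := fun β =>
    TopologicalSpace.isOpen_generateFrom_of_mem (Or.inr ⟨β, rfl⟩)
  have hrng : ∀ p : {e : G.Ed // G.src e = α.rngF}, (ext1 p).rngF = G.rng p.1 := by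
    intro p
    refine (FinPath.rngF_concat α (FinPath.ep p.1) p.2).trans ?_
    rfl
  have key : ({Sum.inl α} : Set (PathSp G))
      = Dset G α ∩ ⋂ p : {e : G.Ed // G.src e = α.rngF}, (Dset G (ext1 p))ᶜ := by
    ext x
    constructor
    · rintro rfl
      refine ⟨ext_self G α, Set.mem_iInter.mpr fun p => ?_⟩
      intro hmem
      rcases hmem with ⟨β, h, heq⟩ | ⟨w, h, heq⟩
      · have hedges := congrArg (fun y : PathSp G =>
          match y with | .inl γ => γ.edges.length | .inr _ => 0) heq
        have hedges' : α.edges.length = ((α.edges ++ [p.1]) ++ β.edges).length := hedges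
        simp at hedges'
      · exact absurd heq (by simp)
    · rintro ⟨hx1, hx2⟩
      rw [Set.mem_iInter] at hx2
      rcases hx1 with ⟨β, h, rfl⟩ | ⟨w, h, rfl⟩
      · rcases β with ⟨bs, bl, bv⟩
        cases bl with
        | nil =>
          refine Set.mem_singleton_iff.mpr (congrArg Sum.inl (finPath_ext rfl ?_))
          show α.edges ++ [] = α.edges
          simp
        | cons f l =>
          exfalso
          have hf : G.src f = α.rngF := bv.1.trans h
          apply hx2 ⟨f, hf⟩
          refine Or.inl ⟨⟨G.rng f, l, bv.2⟩, ?_, ?_⟩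
          · rw [hrng ⟨f, hf⟩]
          · refine congrArg Sum.inl (finPath_ext rfl ?_)
            show α.edges ++ (f :: l) = (α.edges ++ [f]) ++ l
            simp
      · exfalso
        have hf : G.src (w.seq 0) = α.rngF := h
        apply hx2 ⟨w.seq 0, hf⟩
        refine Or.inr ⟨⟨fun n => w.seq (n + 1), fun i => w.valid (i + 1)⟩, ?_, ?_⟩
        · rw [hrng ⟨w.seq 0, hf⟩]
          exact w.valid 0
        · refine congrArg Sum.inr ?_
          show FinPath.concatInf α w h = _
          show (appendInfAux G α.edges α.start α.valid w h).1
            = (appendInfAux G (α.edges ++ [w.seq 0]) α.start _ _ _).1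
        -- use snoc followed by congruence
          refine Eq.trans ?_ (appendInfAux_snoc G (w.seq 0) α.edges α.start _ α.valid
            ⟨fun n => w.seq (n + 1), fun i => w.valid (i + 1)⟩ _ (w.valid 0) ?h2).symm
          case h2 => exact h
          refine appendInfAux_congr G α.edges α.start _ _ _ _ ?_ _ _
          refine (infPath_ext ?_).symm
          funext n
          cases n <;> rfl
  rw [key]
  exact (hDopen α).inter (isOpen_iInter_of_finite fun p => hCopen (ext1 p))

/-- The set `X = Y_∞ ∪ Z` is a closed subset of the path space `Y ∪ Z`,
and `X` is invariant under tail equivalence. -/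
theorem Xset_closed_and_invariant (G : Graph) [Countable G.V] [Countable G.Ed]
    (hns : ∀ v : G.V, ∃ e : G.Ed, G.src e = v) :
    @IsClosed (PathSp G) (pathTop G) (Xset G) ∧
    ∀ x ∈ Xset G, ∀ y : PathSp G, TailEq G x y → y ∈ Xset G := by
  constructor
  · letI := pathTop G
    rw [← isOpen_compl_iff]
    have hcompl : (Xset G)ᶜ
        = ⋃ α ∈ {α : FinPath G | ¬ Vinf G α.rngF}, ({Sum.inl α} : Set (PathSp G)) := by
      ext x
      cases x with
      | inl α =>
        constructor
        · intro hv; exact Set.mem_iUnion₂.mpr ⟨α, hv, rfl⟩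
        · intro hm
          obtain ⟨i, hi, heq⟩ := Set.mem_iUnion₂.mp hm
          cases (heq : (Sum.inl α : FinPath G ⊕ InfPath G) = Sum.inl i)
          exact hi
      | inr z =>
        constructor
        · intro hm; exact absurd trivial hm
        · intro hm
          obtain ⟨i, _, heq⟩ := Set.mem_iUnion₂.mp hm
          cases (heq : (Sum.inr z : FinPath G ⊕ InfPath G) = Sum.inl i)
    rw [hcompl]
    exact isOpen_biUnion fun α hα => isOpen_singleton_inl G α hα
  · rintro x hx y (⟨α, β, γ, h₁, h₂, rfl, rfl⟩ | ⟨α, β, w, h₁, h₂, rfl, rfl⟩)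
    · have hxr : (α.concat γ h₁).rngF = γ.rngF := FinPath.rngF_concat α γ h₁
      have hyr : (β.concat γ h₂).rngF = γ.rngF := FinPath.rngF_concat β γ h₂
      show Vinf G (β.concat γ h₂).rngF
      rw [hyr, ← hxr]
      exact hx
    · trivial

end GraphCstar
end
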